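/- If f is a budget-balanced distribution rule for a welfare function W (with W(∅) = 0) on a finite player set N that guarantees the existence of a pure Nash equilibrium in all games in G(N, f, W), then for every S ⊆ N and every i ∈ S ∖ N^W(S), f(i, S) = 0. -/

import Mathlib

open scoped BigOperators Classical

namespace CostSharing

/-- A welfare sharing game on player set `N`: a finite resource set, a nonempty
finite action set (a collection of subsets of resources) for each player, and a
local welfare function at each resource. -/
structure Game (N : Type) [Fintype N] [DecidableEq N] where
  R : Type
  [finR : Fintype R]
  [decR : DecidableEq R]
  act : N → Finset (Finset R)
  act_nonempty : ∀ i, (act i).Nonempty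
  Wr : R → Finset N → ℝ

attribute [instance] Game.finR Game.decR

variable {N : Type} [Fintype N] [DecidableEq N]

/-- `{a}_r`: the set of players choosing resource `r` in profile `a`. -/
def playersAt {G : Game N} (a : N → Finset G.R) (r : G.R) : Finset N :=
  Finset.univ.filter fun i => r ∈ a i

/-- Player `i`'s utility, where `fD` assigns to each local welfare function its
local distribution rule (so resources with identical welfare functions have
identical distribution rules). -/
noncomputable def utility (G : Game N) (fD : (Finset N → ℝ) → N → Finset N → ℝ)
    (a : N → Finset G.R) (i : N) : ℝ :=
  ∑ r ∈ a i, fD (G.Wr r) i (playersAt a r)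

/-- Pure Nash equilibrium. -/
def IsPNE (G : Game N) (fD : (Finset N → ℝ) → N → Finset N → ℝ)
    (a : N → Finset G.R) : Prop :=
  (∀ i, a i ∈ G.act i) ∧
    ∀ i : N, ∀ b ∈ G.act i,
      utility G fD (Function.update a i b) i ≤ utility G fD a i

/-- Every game in the class `G(N, f^𝕎, 𝕎)` possesses a pure Nash equilibrium. -/
def GuaranteesPNE (𝕎 : Set (Finset N → ℝ))
    (fD : (Finset N → ℝ) → N → Finset N → ℝ) : Prop :=
  ∀ G : Game N, (∀ r : G.R, G.Wr r ∈ 𝕎) → ∃ a, IsPNE G fD a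

/-- Every game in the single-welfare-function class `G(N, f, W)` possesses a
pure Nash equilibrium. -/
def GuaranteesPNE1 (W : Finset N → ℝ) (f : N → Finset N → ℝ) : Prop :=
  ∀ G : Game N, (∀ r : G.R, G.Wr r = W) → ∃ a, IsPNE G (fun _ => f) a

/-- A distribution rule allocates nothing to absent players. -/
def DistRule (f : N → Finset N → ℝ) : Prop :=
  ∀ (i : N) (S : Finset N), i ∉ S → f i S = 0

/-- Budget balance: `∑_{i∈S} f(i,S) = W(S)`. -/
def BudgetBalanced (W : Finset N → ℝ) (f : N → Finset N → ℝ) : Prop :=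
  ∀ S : Finset N, ∑ i ∈ S, f i S = W S

/-- The inclusion (unanimity) welfare function `W^T`. -/
def unanimity (T S : Finset N) : ℝ := if T ⊆ S then 1 else 0

/-- The basis coefficient `q^W_T` of `W` on the unanimity basis (Möbius inversion). -/
def coeff (W : Finset N → ℝ) (T : Finset N) : ℝ :=
  ∑ R ∈ T.powerset, (-1 : ℝ) ^ (T.card - R.card) * W R

/-- The support `𝒯^W` of the basis representation of `W`. -/
noncomputable def supp (W : Finset N → ℝ) : Finset (Finset N) :=
  Finset.univ.filter fun T => coeff W T ≠ 0

/-- `𝒯^W(S)`: the contributing coalitions within `S`. -/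
noncomputable def suppIn (W : Finset N → ℝ) (S : Finset N) : Finset (Finset N) :=
  (supp W).filter (· ⊆ S)

/-- `N^W(S)`: the contributing players within `S`. -/
noncomputable def contributors (W : Finset N → ℝ) (S : Finset N) : Finset N :=
  (suppIn W S).biUnion id

/-- A weight system `ω = (λ, Σ)`: strictly positive player weights together with
an ordered partition of `N`. -/
structure WeightSystem (N : Type) [Fintype N] [DecidableEq N] where
  lam : N → ℝ
  lam_pos : ∀ i, 0 < lam i
  m : ℕ
  part : Fin m → Finset N
  part_nonempty : ∀ k, (part k).Nonempty
  part_disjoint : ∀ k l, k ≠ l → Disjoint (part k) (part l)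
  part_covers : ∀ i : N, ∃ k, i ∈ part k

/-- The index of the block of the ordered partition containing player `i`. -/
noncomputable def WeightSystem.idx (ω : WeightSystem N) (i : N) : Fin ω.m :=
  (ω.part_covers i).choose

/-- `T̄ = T ∩ S_k` where `k = min {j : S_j ∩ T ≠ ∅}`. -/
noncomputable def WeightSystem.bar (ω : WeightSystem N) (T : Finset N) : Finset N :=
  T.filter fun i => ∀ j ∈ T, ω.idx i ≤ ω.idx j

/-- The generalized weighted Shapley value basis rule `f^T_{GWSV}[ω]`. -/
noncomputable def fGWSVbasis (ω : WeightSystem N) (T : Finset N) (i : N)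
    (S : Finset N) : ℝ :=
  if i ∈ ω.bar T ∧ T ⊆ S then ω.lam i / ∑ j ∈ ω.bar T, ω.lam j else 0

/-- The generalized weighted marginal contribution basis rule `f^T_{GWMC}[ω]`. -/
noncomputable def fGWMCbasis (ω : WeightSystem N) (T : Finset N) (i : N)
    (S : Finset N) : ℝ :=
  if i ∈ ω.bar T ∧ T ⊆ S then ω.lam i else 0

/-- The generalized weighted Shapley value distribution rule `f^{W'}_{GWSV}[ω]`. -/
noncomputable def fGWSV (ω : WeightSystem N) (W' : Finset N → ℝ) (i : N)
    (S : Finset N) : ℝ :=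
  ∑ T ∈ supp W', coeff W' T * fGWSVbasis ω T i S

/-- The generalized weighted marginal contribution distribution rule
`f^{W''}_{GWMC}[ω]`. -/
noncomputable def fGWMC (ω : WeightSystem N) (W'' : Finset N → ℝ) (i : N)
    (S : Finset N) : ℝ :=
  ∑ T ∈ supp W'', coeff W'' T * fGWMCbasis ω T i S

/-- The recursively defined basis distribution rules `f^T` of a distribution
rule `f` for `W` (recursion along the min-partition of `(𝒯^W, ⊆)`). -/
noncomputable def basisRule (W : Finset N → ℝ) (f : N → Finset N → ℝ)
    (T : Finset N) (i : N) (S : Finset N) : ℝ :=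
  if T ⊆ S then
    (1 / coeff W T) *
      (f i T - ∑ T' ∈ ((suppIn W T).erase T).attach,
        coeff W T'.1 * basisRule W f T'.1 i S)
  else 0
termination_by T.card
decreasing_by
  have h := T'.2
  simp only [Finset.mem_erase, suppIn, Finset.mem_filter] at h
  exact Finset.card_lt_card (Finset.ssubset_iff_subset_ne.mpr ⟨h.2.2, h.1⟩)



/-! ### Auxiliary lemmas -/

lemma sum_coeff_powerset (W : Finset N → ℝ) (S : Finset N) :
    ∑ T ∈ S.powerset, coeff W T = W S := by
  have key : ∀ R ∈ S.powerset,
      ∑ T ∈ S.powerset.filter (fun T => R ⊆ T), (-1:ℝ)^(T.card - R.card)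
        = if R = S then 1 else 0 := by
    intro R hR
    rw [Finset.mem_powerset] at hR
    have h1 : ∑ T ∈ S.powerset.filter (fun T => R ⊆ T), (-1:ℝ)^(T.card - R.card)
        = ∑ U ∈ (S \ R).powerset, (-1:ℝ)^U.card := by
      refine Finset.sum_nbij' (fun T => T \ R) (fun U => R ∪ U) ?_ ?_ ?_ ?_ ?_
      · intro T hT
        simp only [Finset.mem_filter, Finset.mem_powerset] at hT
        exact Finset.mem_powerset.mpr (Finset.sdiff_subset_sdiff hT.1 le_rfl)
      · intro U hU
        simp only [Finset.mem_powerset] at hU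
        simp only [Finset.mem_filter, Finset.mem_powerset]
        exact ⟨Finset.union_subset hR (hU.trans (Finset.sdiff_subset)), Finset.subset_union_left⟩
      · intro T hT
        simp only [Finset.mem_filter, Finset.mem_powerset] at hT
        exact Finset.union_sdiff_of_subset hT.2
      · intro U hU
        simp only [Finset.mem_powerset] at hU
        exact Finset.union_sdiff_cancel_left (Finset.disjoint_sdiff.mono_right hU)
      · intro T hT
        simp only [Finset.mem_filter, Finset.mem_powerset] at hT
        rw [Finset.card_sdiff_of_subset hT.2]
    rw [h1]
    have h2 : ((∑ U ∈ (S \ R).powerset, (-1:ℤ)^U.card : ℤ) : ℝ)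
        = ∑ U ∈ (S \ R).powerset, (-1:ℝ)^U.card := by push_cast; rfl
    rw [← h2, Finset.sum_powerset_neg_one_pow_card]
    by_cases h : S \ R = ∅
    · have : R = S := le_antisymm hR (Finset.sdiff_eq_empty_iff_subset.mp h)
      simp [h, this]
    · have : R ≠ S := by rintro rfl; simp at h
      simp [h, this]
  calc ∑ T ∈ S.powerset, coeff W T
      = ∑ T ∈ S.powerset, ∑ R ∈ S.powerset,
          (if R ⊆ T then (-1:ℝ)^(T.card - R.card) * W R else 0) := by
        refine Finset.sum_congr rfl fun T hT => ?_
        rw [Finset.mem_powerset] at hT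
        rw [coeff, ← Finset.sum_filter]
        refine Finset.sum_congr ?_ fun _ _ => rfl
        ext R
        simp only [Finset.mem_powerset, Finset.mem_filter]
        exact ⟨fun h => ⟨h.trans hT, h⟩, fun h => h.2⟩
    _ = ∑ R ∈ S.powerset, ∑ T ∈ S.powerset,
          (if R ⊆ T then (-1:ℝ)^(T.card - R.card) * W R else 0) := Finset.sum_comm
    _ = ∑ R ∈ S.powerset, (if R = S then 1 else 0) * W R := by
        refine Finset.sum_congr rfl fun R hR => ?_
        rw [← Finset.sum_filter, ← Finset.sum_mul, key R hR]
    _ = W S := by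
        rw [Finset.sum_congr rfl (fun R _ => by
          rw [ite_mul, one_mul, zero_mul])]
        rw [Finset.sum_ite_eq' S.powerset S W]
        simp


lemma W_eq_sum_suppIn (W : Finset N → ℝ) (S : Finset N) :
    W S = ∑ T ∈ suppIn W S, coeff W T := by
  have h : suppIn W S = S.powerset.filter (fun T => coeff W T ≠ 0) := by
    ext T
    simp only [suppIn, supp, Finset.mem_filter, Finset.mem_univ, true_and,
      Finset.mem_powerset]
    tauto
  rw [h, Finset.sum_filter_ne_zero, sum_coeff_powerset]

lemma mem_contributors {W : Finset N → ℝ} {S T : Finset N} {k : N}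
    (hT : T ∈ suppIn W S) (hk : k ∈ T) : k ∈ contributors W S := by
  exact Finset.mem_biUnion.mpr ⟨T, hT, hk⟩

lemma suppIn_erase_of_not_contrib {W : Finset N → ℝ} {S : Finset N} {i : N}
    (hi : i ∉ contributors W S) : suppIn W (S.erase i) = suppIn W S := by
  ext T
  simp only [suppIn, Finset.mem_filter]
  constructor
  · rintro ⟨h1, h2⟩
    exact ⟨h1, h2.trans (Finset.erase_subset _ _)⟩
  · rintro ⟨h1, h2⟩
    refine ⟨h1, fun k hk => Finset.mem_erase.mpr ⟨?_, h2 hk⟩⟩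
    rintro rfl
    exact hi (mem_contributors (Finset.mem_filter.mpr ⟨h1, h2⟩) hk)

lemma W_erase_of_not_contrib {W : Finset N → ℝ} {S : Finset N} {i : N}
    (hi : i ∉ contributors W S) : W (S.erase i) = W S := by
  rw [W_eq_sum_suppIn W (S.erase i), W_eq_sum_suppIn W S, suppIn_erase_of_not_contrib hi]

lemma contributors_mono {W : Finset N → ℝ} {S S' : Finset N} (h : S' ⊆ S) :
    contributors W S' ⊆ contributors W S := by
  intro k hk
  obtain ⟨T, hT, hkT⟩ := Finset.mem_biUnion.mp hk
  simp only [suppIn, Finset.mem_filter] at hT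
  exact mem_contributors (Finset.mem_filter.mpr ⟨hT.1, hT.2.trans h⟩) hkT

/-! ### The two-resource game -/

/-- A game on two resources (`Bool`) where players `i` and `j` each choose a
single resource and all other members of `S` sit on both resources. -/
@[reducible]
noncomputable def twoGame (W : Finset N → ℝ) (S : Finset N) (i j : N) : Game N where
  R := Bool
  act k := if k = i ∨ k = j then {{true}, {false}}
           else if k ∈ S then {({true, false} : Finset Bool)} else {(∅ : Finset Bool)}
  act_nonempty k := by split_ifs <;> simp
  Wr _ := W

lemma twoGame_mem_playersAt (W : Finset N → ℝ) (S : Finset N) {i j : N}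
    (hij : i ≠ j)
    (b : N → Finset Bool) (x y : Bool)
    (hx : b i = {x}) (hy : b j = {y})
    (hbk : ∀ k, k ≠ i → k ≠ j → b k = if k ∈ S then ({true, false} : Finset Bool) else ∅)
    (r : Bool) (k : N) :
    k ∈ playersAt (G := twoGame W S i j) b r ↔
      ((k = i ∧ r = x) ∨ (k = j ∧ r = y) ∨ (k ∈ S ∧ k ≠ i ∧ k ≠ j)) := by
  simp only [playersAt, Finset.mem_filter, Finset.mem_univ, true_and]
  by_cases h1 : k = i
  · subst h1
    simp [hx, hij, eq_comm]
  by_cases h2 : k = j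
  · subst h2
    simp [hy, h1, eq_comm]
  · rw [hbk k h1 h2]
    split_ifs with h3 <;> cases r <;> simp [h1, h2, h3]

lemma twoGame_playersAt_same (W : Finset N → ℝ) {S : Finset N} {i j : N}
    (hi : i ∈ S) (hj : j ∈ S) (hij : i ≠ j)
    (b : N → Finset Bool) (x : Bool)
    (hx : b i = {x}) (hy : b j = {x})
    (hbk : ∀ k, k ≠ i → k ≠ j → b k = if k ∈ S then ({true, false} : Finset Bool) else ∅) :
    playersAt (G := twoGame W S i j) b x = S := by
  ext k
  rw [twoGame_mem_playersAt W S hij b x x hx hy hbk]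
  constructor
  · rintro (⟨rfl, -⟩ | ⟨rfl, -⟩ | ⟨h, -⟩) <;> assumption
  · intro hk
    by_cases h1 : k = i
    · exact Or.inl ⟨h1, rfl⟩
    by_cases h2 : k = j
    · exact Or.inr (Or.inl ⟨h2, rfl⟩)
    · exact Or.inr (Or.inr ⟨hk, h1, h2⟩)

lemma twoGame_playersAt_i (W : Finset N → ℝ) {S : Finset N} {i j : N}
    (hi : i ∈ S) (hij : i ≠ j)
    (b : N → Finset Bool) (x y : Bool) (hxy : x ≠ y)
    (hx : b i = {x}) (hy : b j = {y})
    (hbk : ∀ k, k ≠ i → k ≠ j → b k = if k ∈ S then ({true, false} : Finset Bool) else ∅) :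
    playersAt (G := twoGame W S i j) b x = S.erase j := by
  ext k
  rw [twoGame_mem_playersAt W S hij b x y hx hy hbk, Finset.mem_erase]
  constructor
  · rintro (⟨rfl, -⟩ | ⟨rfl, h⟩ | ⟨h, -, h2⟩)
    · exact ⟨hij, hi⟩
    · exact absurd h hxy
    · exact ⟨h2, h⟩
  · rintro ⟨h2, hk⟩
    by_cases h1 : k = i
    · exact Or.inl ⟨h1, rfl⟩
    · exact Or.inr (Or.inr ⟨hk, h1, h2⟩)

lemma twoGame_playersAt_j (W : Finset N → ℝ) {S : Finset N} {i j : N}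
    (hj : j ∈ S) (hij : i ≠ j)
    (b : N → Finset Bool) (x y : Bool) (hxy : x ≠ y)
    (hx : b i = {x}) (hy : b j = {y})
    (hbk : ∀ k, k ≠ i → k ≠ j → b k = if k ∈ S then ({true, false} : Finset Bool) else ∅) :
    playersAt (G := twoGame W S i j) b y = S.erase i := by
  ext k
  rw [twoGame_mem_playersAt W S hij b x y hx hy hbk, Finset.mem_erase]
  constructor
  · rintro (⟨rfl, h⟩ | ⟨rfl, -⟩ | ⟨h, h1, -⟩)
    · exact absurd h.symm hxy
    · exact ⟨fun h => hij h.symm, hj⟩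
    · exact ⟨h1, h⟩
  · rintro ⟨h1, hk⟩
    by_cases h2 : k = j
    · exact Or.inr (Or.inl ⟨h2, rfl⟩)
    · exact Or.inr (Or.inr ⟨hk, h1, h2⟩)

lemma twoGame_utility (W : Finset N → ℝ) (f : N → Finset N → ℝ)
    (S : Finset N) (i j : N) (b : N → Finset Bool) (k : N) (z : Bool)
    (hz : b k = {z}) :
    utility (twoGame W S i j) (fun _ => f) b k = f k (playersAt (G := twoGame W S i j) b z) := by
  rw [utility, hz, Finset.sum_singleton]

lemma two_game_dichotomy (W : Finset N → ℝ) (f : N → Finset N → ℝ)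
    (hPNE : GuaranteesPNE1 W f) (S : Finset N) (i j : N)
    (hi : i ∈ S) (hj : j ∈ S) (hij : i ≠ j) :
    (f i (S.erase j) ≤ f i S ∧ f j (S.erase i) ≤ f j S) ∨
    (f i S ≤ f i (S.erase j) ∧ f j S ≤ f j (S.erase i)) := by
  obtain ⟨a, ha1, ha2⟩ := hPNE (twoGame W S i j) (fun _ => rfl)
  have hacti : (twoGame W S i j).act i = {{true}, {false}} := if_pos (Or.inl rfl)
  have hactj : (twoGame W S i j).act j = {{true}, {false}} := if_pos (Or.inr rfl)
  have hxex : ∃ x : Bool, a i = {x} := by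
    have := ha1 i; rw [hacti] at this
    rcases Finset.mem_insert.mp this with h | h
    · exact ⟨true, h⟩
    · exact ⟨false, Finset.mem_singleton.mp h⟩
  have hyex : ∃ y : Bool, a j = {y} := by
    have := ha1 j; rw [hactj] at this
    rcases Finset.mem_insert.mp this with h | h
    · exact ⟨true, h⟩
    · exact ⟨false, Finset.mem_singleton.mp h⟩
  obtain ⟨x, hx⟩ := hxex
  obtain ⟨y, hy⟩ := hyex
  have hak : ∀ k, k ≠ i → k ≠ j →
      a k = if k ∈ S then ({true, false} : Finset Bool) else ∅ := by
    intro k h1 h2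
    have := ha1 k
    simp only [twoGame, h1, h2, or_self, if_false] at this
    split_ifs at this ⊢ <;> simpa using this
  have hmem : ∀ z : Bool, ({z} : Finset Bool) ∈ (twoGame W S i j).act i := by
    intro z; rw [hacti]; cases z <;> simp
  have hmemj : ∀ z : Bool, ({z} : Finset Bool) ∈ (twoGame W S i j).act j := by
    intro z; rw [hactj]; cases z <;> simp
  -- deviation profiles
  set ai' : N → Finset Bool := Function.update a i {!x} with hai'
  set aj' : N → Finset Bool := Function.update a j {!y} with haj'
  have hai'i : ai' i = {!x} := Function.update_self i _ a
  have hai'j : ai' j = {y} := by rw [hai', Function.update_of_ne (fun h => hij h.symm), hy]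
  have hai'k : ∀ k, k ≠ i → k ≠ j →
      ai' k = if k ∈ S then ({true, false} : Finset Bool) else ∅ := by
    intro k h1 h2; rw [hai', Function.update_of_ne h1]; exact hak k h1 h2
  have haj'i : aj' i = {x} := by rw [haj', Function.update_of_ne hij, hx]
  have haj'j : aj' j = {!y} := Function.update_self j _ a
  have haj'k : ∀ k, k ≠ i → k ≠ j →
      aj' k = if k ∈ S then ({true, false} : Finset Bool) else ∅ := by
    intro k h1 h2; rw [haj', Function.update_of_ne h2]; exact hak k h1 h2
  have hdevi := ha2 i {!x} (hmem (!x))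
  have hdevj := ha2 j {!y} (hmemj (!y))
  rw [twoGame_utility W f S i j a i x hx,
      twoGame_utility W f S i j ai' i (!x) hai'i] at hdevi
  rw [twoGame_utility W f S i j a j y hy,
      twoGame_utility W f S i j aj' j (!y) haj'j] at hdevj
  by_cases hxy : x = y
  · subst hxy
    left
    rw [twoGame_playersAt_same W hi hj hij a x hx hy hak] at hdevi hdevj
    rw [twoGame_playersAt_i W hi hij ai' (!x) x (Bool.not_ne_self x) hai'i hai'j hai'k] at hdevi
    rw [twoGame_playersAt_j W hj hij aj' x (!x) ((Bool.not_ne_self x).symm) haj'i haj'j haj'k] at hdevj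
    exact ⟨hdevi, hdevj⟩
  · right
    have hyx : y = !x := by cases x <;> cases y <;> first | rfl | exact absurd rfl hxy
    have hxny : x = !y := by cases x <;> cases y <;> first | rfl | exact absurd rfl hxy
    rw [twoGame_playersAt_i W hi hij a x y hxy hx hy hak] at hdevi
    rw [twoGame_playersAt_j W hj hij a x y hxy hx hy hak] at hdevj
    have h1 : playersAt (G := twoGame W S i j) ai' (!x) = S := by
      have := twoGame_playersAt_same W hi hj hij ai' (!x) hai'i (by rw [hai'j, hyx]) hai'k
      exact this
    have h2 : playersAt (G := twoGame W S i j) aj' (!y) = S := by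
      have := twoGame_playersAt_same W hi hj hij aj' (!y) (by rw [haj'i, hxny]) haj'j haj'k
      exact this
    rw [h1] at hdevi
    rw [h2] at hdevj
    exact ⟨hdevi, hdevj⟩


/-- **Lemma 2.** A budget-balanced distribution rule `f` for `W` that guarantees
a pure Nash equilibrium in all games in `G(N, f, W)` allocates nothing to
noncontributing players: `f(i,S) = 0` for `i ∈ S ∖ N^W(S)`. -/
theorem zero_on_noncontributing_players (N : Type) [Fintype N] [DecidableEq N]
    (hN : 1 < Fintype.card N)
    (W : Finset N → ℝ) (f : N → Finset N → ℝ)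
    (hW0 : W ∅ = 0) (hdist : DistRule f) (hbb : BudgetBalanced W f)
    (hPNE : GuaranteesPNE1 W f) :
    ∀ S : Finset N, ∀ i ∈ S \ contributors W S, f i S = 0 := by
  intro S
  induction S using Finset.strongInductionOn with
  | _ S IH =>
  intro i hi
  rw [Finset.mem_sdiff] at hi
  obtain ⟨hiS, hic⟩ := hi
  by_contra hc
  -- the telescoping sum
  have hWerase : W (S.erase i) = W S := W_erase_of_not_contrib hic
  have hsum : ∑ j ∈ S.erase i, (f j S - f j (S.erase i)) = -(f i S) := by
    rw [Finset.sum_sub_distrib]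
    have h1 : f i S + ∑ j ∈ S.erase i, f j S = W S := by
      rw [Finset.add_sum_erase S (fun j => f j S) hiS]; exact hbb S
    have h2 : ∑ j ∈ S.erase i, f j (S.erase i) = W S := by
      rw [hbb (S.erase i)]; exact hWerase
    linarith
  -- find j with opposite-sign marginal
  have hjex : ∃ j ∈ S.erase i, f i S * (f j S - f j (S.erase i)) < 0 := by
    by_contra hno
    push_neg at hno
    have h0 : (0:ℝ) ≤ ∑ j ∈ S.erase i, f i S * (f j S - f j (S.erase i)) :=
      Finset.sum_nonneg hno
    rw [← Finset.mul_sum, hsum] at h0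
    nlinarith [sq_pos_of_ne_zero hc, sq_abs (f i S)]
  obtain ⟨j, hjmem, hjsign⟩ := hjex
  rw [Finset.mem_erase] at hjmem
  obtain ⟨hji, hjS⟩ := hjmem
  have hij : i ≠ j := fun h => hji h.symm
  -- induction hypothesis: f i (S.erase j) = 0
  have hIH : f i (S.erase j) = 0 := by
    refine IH (S.erase j) (Finset.erase_ssubset hjS) i ?_
    rw [Finset.mem_sdiff]
    refine ⟨Finset.mem_erase.mpr ⟨hij, hiS⟩, fun h => hic ?_⟩
    exact contributors_mono (Finset.erase_subset _ _) h
  -- the two-resource game dichotomy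
  rcases two_game_dichotomy W f hPNE S i j hiS hjS hij with ⟨h1, h2⟩ | ⟨h1, h2⟩
  · rw [hIH] at h1
    nlinarith
  · rw [hIH] at h1
    nlinarith


end CostSharing
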